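/- Let G be a finite group, F a group, (F, G, ◁, ▷) a matched pair, σ cocycle data and τ trivial, and suppose the Hopf algebra H = k^G τ#_σ kF admits a coquasitriangular structure. Let W with basis {w^(1), …, w^(n)} be a simple right comodule over the coalgebra k^G, with coaction ρ(w^(j)) = Σ_{k=1}^n w^(k) ⊗ (Σ_{h∈G} b^h_{kj} p_h), where b^h_{kj} ∈ k. Then for every f ∈ F, g ∈ G_f and z ∈ T_f: Σ_{j=1}^n b^{(z⁻¹ g z) ◁ (z⁻¹ ▷ f)}_{jj} = Σ_{j=1}^n b^{z⁻¹ g z}_{jj}. -/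
import Mathlib


/-- A matched pair of groups `(F, G, ◁, ▷)`: `rtr g f = g ▷ f` is an action of the
group `G` on the set `F`, and `ltl g f = g ◁ f` is an action of the group `F` on the
set `G`, satisfying the matched pair compatibility conditions. -/
structure MatchedPair (F G : Type*) [Group F] [Group G] where
  rtr : G → F → F
  ltl : G → F → G
  one_rtr : ∀ f, rtr 1 f = f
  mul_rtr : ∀ g g' f, rtr (g * g') f = rtr g (rtr g' f)
  ltl_one : ∀ g, ltl g 1 = g
  ltl_mul : ∀ g f f', ltl g (f * f') = ltl (ltl g f) f'
  rtr_mul : ∀ g f f', rtr g (f * f') = rtr g f * rtr (ltl g f) f'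
  mul_ltl : ∀ g g' f, ltl (g * g') f = ltl g (rtr g' f) * ltl g' f

/-- Cocycle data `(σ, τ)` for the abelian extension `k^G τ#_σ kF`. -/
structure CocycleData (k F G : Type*) [Field k] [Group F] [Group G]
    (mp : MatchedPair F G) where
  sig : G → F → F → kˣ
  tau : G → G → F → kˣ
  sig_one_left : ∀ g f, sig g 1 f = 1
  sig_one_right : ∀ g f, sig g f 1 = 1
  one_sig : ∀ f f', sig 1 f f' = 1
  sig_cocycle : ∀ g f f' f'',
    sig (mp.ltl g f) f' f'' * sig g f (f' * f'') = sig g f f' * sig g (f * f') f''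
  one_tau : ∀ g f, tau 1 g f = 1
  tau_one : ∀ g f, tau g 1 f = 1
  tau_one_right : ∀ g g', tau g g' 1 = 1
  tau_cocycle : ∀ g g' g'' f,
    tau g g' (mp.rtr g'' f) * tau (g * g') g'' f = tau g (g' * g'') f * tau g' g'' f
  compat : ∀ g g' f f',
    sig (g * g') f f' * tau g g' (f * f')
      = sig g (mp.rtr g' f) (mp.rtr (mp.ltl g' f) f') * sig g' f f' * tau g g' f
        * tau (mp.ltl g (mp.rtr g' f)) (mp.ltl g' f) f'

/-- The product `(p_g # f)(p_{g'} # f') = δ_{g ◁ f, g'} σ(g; f, f') p_g # (f f')` of two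
basis elements of `H = k^G τ#_σ kF`, as an element of `H` (realized as `(G × F) →₀ k`). -/
noncomputable def mulB {k F G : Type*} [Field k] [Group F] [Group G] [DecidableEq G]
    (mp : MatchedPair F G) (cd : CocycleData k F G mp) (i j : G × F) : (G × F) →₀ k :=
  if mp.ltl i.1 i.2 = j.1 then
    Finsupp.single (i.1, i.2 * j.2) ((cd.sig i.1 i.2 j.2 : kˣ) : k)
  else 0

/-- `R` (given by its values `R g f h f' = R(p_g # f, p_h # f')` on the basis
`{p_g # f}` of `H = k^G τ#_σ kF`) is a coquasitriangular structure on `H`: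
it is convolution invertible, satisfies `R(a, bc) = Σ R(a₁, c) R(a₂, b)` and
`R(ab, c) = Σ R(a, c₁) R(b, c₂)`, and the quasi-commutativity axiom
`Σ R(a₁, b₁) a₂ b₂ = Σ b₁ a₁ R(a₂, b₂)`, all expressed on basis elements using
`Δ(p_g # f) = Σ_x τ(g x⁻¹, x; f) (p_{g x⁻¹} # (x ▷ f)) ⊗ (p_x # f)` and
`ε(p_g # f) = δ_{g,1}`. -/
structure IsCQT {k F G : Type*} [Field k] [Group F] [Group G] [Fintype G] [DecidableEq G]
    (mp : MatchedPair F G) (cd : CocycleData k F G mp)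
    (R : G → F → G → F → k) : Prop where
  conv_inv : ∃ R' : G → F → G → F → k,
    (∀ (g h : G) (f f' : F),
      ∑ x : G, ∑ y : G,
        ((cd.tau (g * x⁻¹) x f : kˣ) : k) * ((cd.tau (h * y⁻¹) y f' : kˣ) : k) *
          R (g * x⁻¹) (mp.rtr x f) (h * y⁻¹) (mp.rtr y f') * R' x f y f'
        = (if g = 1 then (1 : k) else 0) * (if h = 1 then (1 : k) else 0)) ∧
    (∀ (g h : G) (f f' : F),
      ∑ x : G, ∑ y : G,
        ((cd.tau (g * x⁻¹) x f : kˣ) : k) * ((cd.tau (h * y⁻¹) y f' : kˣ) : k) *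
          R' (g * x⁻¹) (mp.rtr x f) (h * y⁻¹) (mp.rtr y f') * R x f y f'
        = (if g = 1 then (1 : k) else 0) * (if h = 1 then (1 : k) else 0))
  cqt1 : ∀ (g h l : G) (f f' f'' : F),
    (if mp.ltl h f' = l then (1 : k) else 0) * ((cd.sig h f' f'' : kˣ) : k)
        * R g f h (f' * f'')
      = ∑ x : G, ((cd.tau (g * x⁻¹) x f : kˣ) : k)
          * R (g * x⁻¹) (mp.rtr x f) l f'' * R x f h f'
  cqt2 : ∀ (g h l : G) (f f' f'' : F),
    (if mp.ltl g f = h then (1 : k) else 0) * ((cd.sig g f f' : kˣ) : k)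
        * R g (f * f') l f''
      = ∑ x : G, ((cd.tau (l * x⁻¹) x f'' : kˣ) : k)
          * R g f (l * x⁻¹) (mp.rtr x f'') * R h f' x f''
  qcomm : ∀ (g h : G) (f f' : F),
    (∑ x : G, ∑ y : G,
      (((cd.tau (g * x⁻¹) x f : kˣ) : k) * ((cd.tau (h * y⁻¹) y f' : kˣ) : k) *
        R (g * x⁻¹) (mp.rtr x f) (h * y⁻¹) (mp.rtr y f')) • mulB mp cd (x, f) (y, f'))
      = ∑ x : G, ∑ y : G,
        (((cd.tau (g * x⁻¹) x f : kˣ) : k) * ((cd.tau (h * y⁻¹) y f' : kˣ) : k) *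
          R x f y f') • mulB mp cd (h * y⁻¹, mp.rtr y f') (g * x⁻¹, mp.rtr x f)


/-! ### Auxiliary machinery -/

section BasicMP
variable {F G : Type*} [Group F] [Group G]

lemma MatchedPair.rtr_one' (mp : MatchedPair F G) (g : G) : mp.rtr g 1 = 1 := by
  have h := mp.rtr_mul g 1 1
  rw [mul_one, mp.ltl_one] at h
  exact (left_eq_mul.mp h)

lemma MatchedPair.one_ltl' (mp : MatchedPair F G) (f : F) : mp.ltl 1 f = 1 := by
  have h := mp.mul_ltl 1 1 f
  rw [one_mul, mp.one_rtr] at h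
  exact (left_eq_mul.mp h)

/-- For `a ∈ G_f` and `z` commuting with `a`: `a ◁ (z ▷ f) = (z◁f)(a◁f)(z◁f)⁻¹`. -/
lemma MatchedPair.ltl_rtr_conj (mp : MatchedPair F G) (a z : G) (f : F)
    (ha : mp.rtr a f = f) (hc : a * z = z * a) :
    mp.ltl a (mp.rtr z f) = mp.ltl z f * mp.ltl a f * (mp.ltl z f)⁻¹ := by
  have h1 := mp.mul_ltl a z f
  have h2 := mp.mul_ltl z a f
  rw [ha] at h2
  rw [hc, h2] at h1
  rw [h1]
  group

end BasicMP

section CQTAux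

variable {k F G : Type*} [Field k] [Group F] [Group G] [Fintype G] [DecidableEq G]
variable {mp : MatchedPair F G} {cd : CocycleData k F G mp}

/-- The key consequence of quasi-commutativity at `f' = 1` (with `τ` trivial),
evaluated on the basis of `H`. -/
lemma Q1 [DecidableEq F] (htau : ∀ (g g' : G) (f : F), cd.tau g g' f = 1)
    {R : G → F → G → F → k} (hC : IsCQT mp cd R) (g h z : G) (f w : F) :
    (if f = w then R (g * z⁻¹) (mp.rtr z f) (h * (mp.ltl z f)⁻¹) 1 else 0)
      = (if mp.rtr (z⁻¹ * g) f = w then R (z⁻¹ * g) f (z⁻¹ * h) 1 else 0) := by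
  have hq := hC.qcomm g h f 1
  have happ := congrArg (fun φ : (G × F) →₀ k => φ (z, w)) hq
  simp only [mulB, htau, Units.val_one, one_mul, mp.rtr_one', mp.ltl_one,
    cd.sig_one_right, cd.sig_one_left, mul_one, Finsupp.finset_sum_apply,
    Finsupp.smul_apply, smul_eq_mul] at happ
  have hLside :
      (∑ x : G, ∑ y : G, R (g * x⁻¹) (mp.rtr x f) (h * y⁻¹) 1 *
          (if mp.ltl x f = y then Finsupp.single (x, f) (1 : k) else 0) (z, w))
        = (if f = w then R (g * z⁻¹) (mp.rtr z f) (h * (mp.ltl z f)⁻¹) 1 else 0) := by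
    rw [Fintype.sum_eq_single z]
    · rw [Fintype.sum_eq_single (mp.ltl z f)]
      · rw [if_pos rfl, Finsupp.single_apply]
        by_cases hw : f = w
        · subst hw; simp
        · rw [if_neg, if_neg hw, mul_zero]
          intro he
          exact hw (congrArg Prod.snd he)
      · intro y hy
        rw [if_neg (fun hc => hy hc.symm)]
        simp
    · intro x hx
      apply Finset.sum_eq_zero
      intro y _
      by_cases hc : mp.ltl x f = y
      · rw [if_pos hc, Finsupp.single_apply, if_neg, mul_zero]
        intro he
        exact hx (congrArg Prod.fst he)
      · rw [if_neg hc]; simp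
  have hRside :
      (∑ x : G, ∑ y : G, R x f y 1 *
          (if (h * y⁻¹ : G) = g * x⁻¹ then
            Finsupp.single ((h * y⁻¹ : G), mp.rtr x f) (1 : k) else 0) (z, w))
        = (if mp.rtr (z⁻¹ * g) f = w then R (z⁻¹ * g) f (z⁻¹ * h) 1 else 0) := by
    rw [Fintype.sum_eq_single (z⁻¹ * g)]
    · rw [Fintype.sum_eq_single (z⁻¹ * h)]
      · have e1 : h * (z⁻¹ * h)⁻¹ = z := by group
        have e2 : g * (z⁻¹ * g)⁻¹ = z := by group
        rw [e1, e2, if_pos rfl, Finsupp.single_apply]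
        by_cases hw : mp.rtr (z⁻¹ * g) f = w
        · subst hw; simp
        · rw [if_neg, if_neg hw, mul_zero]
          intro he
          exact hw (congrArg Prod.snd he)
      · intro y hy
        by_cases hc : (h * y⁻¹ : G) = g * (z⁻¹ * g)⁻¹
        · rw [if_pos hc, Finsupp.single_apply, if_neg, mul_zero]
          intro he
          apply hy
          have : h * y⁻¹ = z := congrArg Prod.fst he
          rw [← this]; group
        · rw [if_neg hc]; simp
    · intro x hx
      apply Finset.sum_eq_zero
      intro y _
      by_cases hc : (h * y⁻¹ : G) = g * x⁻¹
      · rw [if_pos hc, Finsupp.single_apply, if_neg, mul_zero]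
        intro he
        apply hx
        have h1 : h * y⁻¹ = z := congrArg Prod.fst he
        have h2 : g * x⁻¹ = z := by rw [← hc, h1]
        rw [← inv_inv x, ← inv_mul_eq_iff_eq_mul.mpr h2.symm]
        group
      · rw [if_neg hc]; simp
  rw [hLside, hRside] at happ
  exact happ

/-- Vanishing: `R(p_g # f, p_h # 1) = 0` unless `g ∈ G_f`. -/
lemma RV (htau : ∀ (g g' : G) (f : F), cd.tau g g' f = 1)
    {R : G → F → G → F → k} (hC : IsCQT mp cd R) (g h : G) (f : F)
    (hst : mp.rtr g f ≠ f) : R g f h 1 = 0 := by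
  classical
  have h0 := Q1 htau hC g h 1 f (mp.rtr g f)
  simp only [inv_one, one_mul, mul_one, mp.one_rtr, mp.one_ltl'] at h0
  rw [if_neg (fun he => hst he.symm)] at h0
  simpa using h0.symm

/-- Invariance: `R(p_{zaz⁻¹} # z▷f, p_h # 1) = R(p_a # f, p_{z⁻¹h(z◁f)} # 1)`
for `a ∈ G_f`. -/
lemma RI (htau : ∀ (g g' : G) (f : F), cd.tau g g' f = 1)
    {R : G → F → G → F → k} (hC : IsCQT mp cd R) (g h z : G) (f : F)
    (hst : mp.rtr (z⁻¹ * g) f = f) :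
    R (g * z⁻¹) (mp.rtr z f) h 1 = R (z⁻¹ * g) f (z⁻¹ * (h * mp.ltl z f)) 1 := by
  classical
  have h0 := Q1 htau hC g (h * mp.ltl z f) z f f
  rw [if_pos rfl, if_pos hst, mul_inv_cancel_right] at h0
  exact h0

section WithMatrices

variable {n : ℕ}

/-- `𝔅(g, w) = Σ_h R(p_g # w, p_h # 1) b(h)`. -/
noncomputable def BB (R : G → F → G → F → k) (b : G → Matrix (Fin n) (Fin n) k) :
    G → F → Matrix (Fin n) (Fin n) k :=
  fun g w => ∑ h : G, R g w h 1 • b h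

variable (mp) in
/-- Convolution product in the groupoid algebra of `G ⋉ F` with matrix coefficients. -/
noncomputable def convM (Φ Ψ : G → F → Matrix (Fin n) (Fin n) k) :
    G → F → Matrix (Fin n) (Fin n) k :=
  fun g w => ∑ x : G, Φ (g * x⁻¹) (mp.rtr x w) * Ψ x w

/-- The unit of the groupoid algebra. -/
noncomputable def oneM : G → F → Matrix (Fin n) (Fin n) k :=
  fun g _ => if g = 1 then (1 : Matrix (Fin n) (Fin n) k) else 0

lemma convM_assoc (Φ Ψ Ξ : G → F → Matrix (Fin n) (Fin n) k) :
    convM mp (convM mp Φ Ψ) Ξ = convM mp Φ (convM mp Ψ Ξ) := by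
  funext g w
  simp only [convM, Finset.sum_mul, Finset.mul_sum]
  conv_rhs => rw [Finset.sum_comm]
  refine Finset.sum_congr rfl (fun x _ => ?_)
  refine Fintype.sum_equiv (Equiv.mulRight x) _ _ (fun y => ?_)
  simp only [Equiv.coe_mulRight, mul_inv_rev, mul_inv_cancel_right, ← mp.mul_rtr, mul_assoc,
    mul_inv_cancel, mul_one]

lemma convM_one_left (Φ : G → F → Matrix (Fin n) (Fin n) k) :
    convM mp oneM Φ = Φ := by
  funext g w
  simp only [convM, oneM]
  rw [Fintype.sum_eq_single g]
  · simp
  · intro x hx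
    rw [if_neg, zero_mul]
    intro hc
    exact hx (mul_inv_eq_one.mp hc).symm

lemma convM_one_right (Φ : G → F → Matrix (Fin n) (Fin n) k) :
    convM mp Φ oneM = Φ := by
  funext g w
  simp only [convM, oneM]
  rw [Fintype.sum_eq_single 1]
  · simp [mp.one_rtr]
  · intro x hx
    rw [if_neg hx, mul_zero]

lemma trace_conj {n : ℕ} (b : G → Matrix (Fin n) (Fin n) k) (hb1 : b 1 = 1)
    (hbmul : ∀ u w : G, b u * b w = b (u * w)) (u v : G) :
    (b (u * v * u⁻¹)).trace = (b v).trace := by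
  rw [← hbmul, ← hbmul, Matrix.trace_mul_comm, ← mul_assoc, hbmul, inv_mul_cancel, hb1, one_mul]

/-- The key intertwining relation: `b(a) 𝔅(a⁻¹g, w) = 𝔅(ga⁻¹, a▷w) b(a◁w)`. -/
lemma KEY {n : ℕ} (htau : ∀ (g g' : G) (f : F), cd.tau g g' f = 1)
    {R : G → F → G → F → k} (hC : IsCQT mp cd R)
    (b : G → Matrix (Fin n) (Fin n) k)
    (hbmul : ∀ u w : G, b u * b w = b (u * w)) (a g : G) (w : F) :
    b a * BB R b (a⁻¹ * g) w = BB R b (g * a⁻¹) (mp.rtr a w) * b (mp.ltl a w) := by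
  classical
  by_cases hst : mp.rtr (a⁻¹ * g) w = w
  · calc b a * BB R b (a⁻¹ * g) w
        = ∑ h : G, R (a⁻¹ * g) w h 1 • b (a * h) := by
          simp only [BB, Finset.mul_sum, mul_smul_comm, hbmul]
      _ = ∑ h : G, R (a⁻¹ * g) w (a⁻¹ * h) 1 • b h := by
          refine Fintype.sum_equiv (Equiv.mulLeft a) _ _ (fun h => ?_)
          simp
      _ = ∑ h : G, R (a⁻¹ * g) w (a⁻¹ * (h * mp.ltl a w)) 1 • b (h * mp.ltl a w) := by
          refine (Fintype.sum_equiv (Equiv.mulRight (mp.ltl a w)) _ _ (fun h => ?_)).symm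
          simp
      _ = BB R b (g * a⁻¹) (mp.rtr a w) * b (mp.ltl a w) := by
          simp only [BB, Finset.sum_mul, smul_mul_assoc, hbmul]
          refine Finset.sum_congr rfl (fun h _ => ?_)
          rw [RI htau hC g h a w hst]
  · have hz1 : BB R b (a⁻¹ * g) w = 0 := by
      apply Finset.sum_eq_zero
      intro h _
      rw [RV htau hC _ _ _ hst, zero_smul]
    have hne : mp.rtr (g * a⁻¹) (mp.rtr a w) ≠ mp.rtr a w := by
      rw [← mp.mul_rtr]
      intro hcon
      apply hst
      have h1 : (a⁻¹ : G) * (g * a⁻¹ * a) = a⁻¹ * g := by group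
      have h2 : mp.rtr (a⁻¹ * (g * a⁻¹ * a)) w = mp.rtr a⁻¹ (mp.rtr (g * a⁻¹ * a) w) :=
        mp.mul_rtr _ _ _
      rw [h1, hcon, ← mp.mul_rtr, inv_mul_cancel, mp.one_rtr] at h2
      exact h2
    have hz2 : BB R b (g * a⁻¹) (mp.rtr a w) = 0 := by
      apply Finset.sum_eq_zero
      intro h _
      rw [RV htau hC _ _ _ hne, zero_smul]
    rw [hz1, hz2, mul_zero, zero_mul]

/-- Convolution invertibility of `𝔅`. -/
lemma convM_BB {n : ℕ} (htau : ∀ (g g' : G) (f : F), cd.tau g g' f = 1)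
    (R R' : G → F → G → F → k)
    (b : G → Matrix (Fin n) (Fin n) k) (hb1 : b 1 = 1)
    (hbmul : ∀ u w : G, b u * b w = b (u * w))
    (hinv : ∀ (g h : G) (f f' : F),
      ∑ x : G, ∑ y : G,
        ((cd.tau (g * x⁻¹) x f : kˣ) : k) * ((cd.tau (h * y⁻¹) y f' : kˣ) : k) *
          R (g * x⁻¹) (mp.rtr x f) (h * y⁻¹) (mp.rtr y f') * R' x f y f'
        = (if g = 1 then (1 : k) else 0) * (if h = 1 then (1 : k) else 0)) :
    convM mp (BB R b) (BB R' b) = oneM := by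
  classical
  funext g f
  have hinv1 : ∀ h : G, (∑ x : G, ∑ y : G,
      R (g * x⁻¹) (mp.rtr x f) (h * y⁻¹) 1 * R' x f y 1)
      = (if g = 1 then (1 : k) else 0) * (if h = 1 then (1 : k) else 0) := by
    intro h
    have h0 := hinv g h f 1
    simpa [htau, mp.rtr_one'] using h0
  calc convM mp (BB R b) (BB R' b) g f
      = ∑ x : G, ∑ y : G, ∑ h : G,
          (R (g * x⁻¹) (mp.rtr x f) h 1 * R' x f y 1) • b (h * y) := by
        simp only [convM, BB, Finset.sum_mul, Finset.mul_sum, smul_mul_smul_comm, hbmul]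
    _ = ∑ x : G, ∑ y : G, ∑ h : G,
          (R (g * x⁻¹) (mp.rtr x f) (h * y⁻¹) 1 * R' x f y 1) • b h := by
        refine Finset.sum_congr rfl (fun x _ => ?_)
        refine Finset.sum_congr rfl (fun y _ => ?_)
        refine Fintype.sum_equiv (Equiv.mulRight y) _ _ (fun h => ?_)
        simp
    _ = ∑ x : G, ∑ h : G, ∑ y : G,
          (R (g * x⁻¹) (mp.rtr x f) (h * y⁻¹) 1 * R' x f y 1) • b h := by
        refine Finset.sum_congr rfl (fun x _ => ?_)
        rw [Finset.sum_comm]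
    _ = ∑ h : G, (∑ x : G, ∑ y : G,
          R (g * x⁻¹) (mp.rtr x f) (h * y⁻¹) 1 * R' x f y 1) • b h := by
        rw [Finset.sum_comm]
        refine Finset.sum_congr rfl (fun h _ => ?_)
        rw [Finset.sum_smul]
        refine Finset.sum_congr rfl (fun x _ => ?_)
        rw [Finset.sum_smul]
    _ = oneM g f := by
        simp only [hinv1]
        rw [Fintype.sum_eq_single 1]
        · by_cases hg : g = 1 <;> simp [hg, oneM, hb1]
        · intro h hh
          rw [if_neg hh, mul_zero, zero_smul]

/-- The trace over the conjugacy class of `(a, f)` in the action groupoid is tracial. -/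
lemma Tr_comm {n : ℕ} (a : G) (f : F) (ha : mp.rtr a f = f)
    (Φ Ψ : G → F → Matrix (Fin n) (Fin n) k) :
    ∑ z : G, ((convM mp Φ Ψ) (z * a * z⁻¹) (mp.rtr z f)).trace
      = ∑ z : G, ((convM mp Ψ Φ) (z * a * z⁻¹) (mp.rtr z f)).trace := by
  simp only [convM, Matrix.trace_sum]
  rw [← Finset.sum_product', ← Finset.sum_product']
  refine Finset.sum_nbij' (fun p => (p.2 * p.1, p.1 * a * p.1⁻¹ * p.2⁻¹))
    (fun p => ((p.1 * a * p.1⁻¹ * p.2⁻¹)⁻¹ * p.1, p.1 * a * p.1⁻¹ * p.2⁻¹))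
    (fun p _ => Finset.mem_univ _) (fun p _ => Finset.mem_univ _) ?_ ?_ ?_
  · intro p _
    obtain ⟨z, x⟩ := p
    simp only [Prod.mk.injEq]
    constructor <;> group
  · intro p _
    obtain ⟨z, x⟩ := p
    simp only [Prod.mk.injEq]
    constructor <;> group
  · intro p _
    obtain ⟨z, x⟩ := p
    dsimp only
    have hA : (x * z) * a * (x * z)⁻¹ * (z * a * z⁻¹ * x⁻¹)⁻¹ = x := by group
    have hB : mp.rtr (z * a * z⁻¹ * x⁻¹) (mp.rtr (x * z) f) = mp.rtr z f := by
      rw [← mp.mul_rtr]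
      have h1 : (z * a * z⁻¹ * x⁻¹) * (x * z) = z * a := by group
      rw [h1, mp.mul_rtr, ha]
    have hC' : mp.rtr (x * z) f = mp.rtr x (mp.rtr z f) := mp.mul_rtr x z f
    rw [hA, hB, hC', Matrix.trace_mul_comm]

/-- Core statement: for `a ∈ G_f`, `tr b(a ◁ f) = tr b(a)`. -/
lemma core_trace [CharZero k] (htau : ∀ (g g' : G) (f : F), cd.tau g g' f = 1)
    {R : G → F → G → F → k} (hC : IsCQT mp cd R) {n : ℕ}
    (b : G → Matrix (Fin n) (Fin n) k) (hb1 : b 1 = 1)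
    (hbmul : ∀ u w : G, b u * b w = b (u * w))
    (f : F) (a : G) (ha : mp.rtr a f = f) :
    (b (mp.ltl a f)).trace = (b a).trace := by
  classical
  obtain ⟨R', hi1, hi2⟩ := hC.conv_inv
  set Ua : G → F → Matrix (Fin n) (Fin n) k := fun g _ => if g = a then b a else 0 with hUa
  set Va : G → F → Matrix (Fin n) (Fin n) k :=
    fun g w => if g = a then b (mp.ltl a w) else 0 with hVa
  have hBB' : convM mp (BB R b) (BB R' b) = oneM := convM_BB htau R R' b hb1 hbmul hi1
  have h'BB : convM mp (BB R' b) (BB R b) = oneM := convM_BB htau R' R b hb1 hbmul hi2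
  have hUB : convM mp Ua (BB R b) = convM mp (BB R b) Va := by
    funext g w
    simp only [convM, hUa, hVa]
    rw [Fintype.sum_eq_single (a⁻¹ * g) (f := fun x =>
        (if (g * x⁻¹ : G) = a then b a else 0) * BB R b x w)]
    · rw [Fintype.sum_eq_single a (f := fun x =>
          BB R b (g * x⁻¹) (mp.rtr x w) * (if x = a then b (mp.ltl a w) else 0))]
      · rw [if_pos (by group), if_pos rfl]
        exact KEY htau hC b hbmul a g w
      · intro x hx
        rw [if_neg hx, mul_zero]
    · intro x hx
      rw [if_neg, zero_mul]
      intro hc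
      apply hx
      rw [← hc]
      group
  set Tr : (G → F → Matrix (Fin n) (Fin n) k) → k :=
    fun Φ => ∑ z : G, (Φ (z * a * z⁻¹) (mp.rtr z f)).trace with hTrdef
  have key : Tr Ua = Tr Va := by
    calc Tr Ua = Tr (convM mp Ua oneM) := by rw [convM_one_right]
    _ = Tr (convM mp Ua (convM mp (BB R b) (BB R' b))) := by rw [hBB']
    _ = Tr (convM mp (convM mp Ua (BB R b)) (BB R' b)) := by rw [convM_assoc]
    _ = Tr (convM mp (convM mp (BB R b) Va) (BB R' b)) := by rw [hUB]
    _ = Tr (convM mp (BB R' b) (convM mp (BB R b) Va)) := Tr_comm a f ha _ _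
    _ = Tr (convM mp (convM mp (BB R' b) (BB R b)) Va) := by rw [convM_assoc]
    _ = Tr (convM mp oneM Va) := by rw [h'BB]
    _ = Tr Va := by rw [convM_one_left]
  have hUa_eval : Tr Ua = ∑ z : G, (if z * a * z⁻¹ = a then (b a).trace else 0) := by
    simp only [hTrdef, hUa]
    refine Finset.sum_congr rfl (fun z _ => ?_)
    by_cases hz : z * a * z⁻¹ = a <;> simp [hz]
  have hVa_eval : Tr Va = ∑ z : G, (if z * a * z⁻¹ = a then (b (mp.ltl a f)).trace else 0) := by
    simp only [hTrdef, hVa]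
    refine Finset.sum_congr rfl (fun z _ => ?_)
    by_cases hz : z * a * z⁻¹ = a
    · rw [if_pos hz, if_pos hz]
      have hcomm : a * z = z * a := by
        conv_lhs => rw [← hz]
        group
      rw [mp.ltl_rtr_conj a z f ha hcomm, trace_conj b hb1 hbmul]
    · simp [hz]
  rw [hUa_eval, hVa_eval] at key
  rw [← Finset.sum_filter, ← Finset.sum_filter, Finset.sum_const, Finset.sum_const] at key
  have hcard : (Finset.filter (fun z : G => z * a * z⁻¹ = a) Finset.univ).card ≠ 0 := by
    apply Finset.card_ne_zero_of_mem (a := 1)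
    simp
  have hcast : ((Finset.filter (fun z : G => z * a * z⁻¹ = a) Finset.univ).card : k) ≠ 0 :=
    Nat.cast_ne_zero.mpr hcard
  rw [nsmul_eq_mul, nsmul_eq_mul] at key
  exact (mul_left_cancel₀ hcast key).symm

end WithMatrices

end CQTAux

/-- Let `τ` be trivial and suppose `H = k^G τ#_σ kF` admits a coquasitriangular
structure. Let `W` (dimension `n`) be a simple right comodule over the coalgebra `k^G`
with coaction matrices `b h` (`(b h) k j = b^h_{kj}`). Then for every `f ∈ F`, every
complete set `T` of representatives of the right cosets of `G_f` in `G` with `1 ∈ T`,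
every `g ∈ G_f` and every `z ∈ T`:
`Σ_j b^{(z⁻¹gz) ◁ (z⁻¹ ▷ f)}_{jj} = Σ_j b^{z⁻¹gz}_{jj}`. -/
theorem trace_ltl_eq_of_cqt_tau_trivial {k F G : Type*} [Field k] [IsAlgClosed k]
    [CharZero k] [Group F] [Group G] [Fintype G] [DecidableEq G]
    (mp : MatchedPair F G) (cd : CocycleData k F G mp)
    (htau : ∀ (g g' : G) (f : F), cd.tau g g' f = 1)
    (hR : ∃ R : G → F → G → F → k, IsCQT mp cd R)
    (n : ℕ) (hn : 0 < n)
    (b : G → Matrix (Fin n) (Fin n) k)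
    (hb1 : b 1 = 1)
    (hbcoassoc : ∀ u w : G, b u * b w = b (u * w))
    (hbsimple : ∀ U : Submodule k (Fin n → k),
      (∀ v ∈ U, ∀ u : G, (b u).mulVec v ∈ U) → U = ⊥ ∨ U = ⊤) :
    ∀ (f : F) (T : Set G), (1 : G) ∈ T →
      (∀ x : G, ∃! z : G, z ∈ T ∧ mp.rtr (x * z⁻¹) f = f) →
      ∀ g : G, mp.rtr g f = f → ∀ z ∈ T,
        (∑ j : Fin n, b (mp.ltl (z⁻¹ * g * z) (mp.rtr z⁻¹ f)) j j)
          = ∑ j : Fin n, b (z⁻¹ * g * z) j j := by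
  intro f T hT1 hTrep g hgf z hz
  obtain ⟨R, hC⟩ := hR
  have ha : mp.rtr (z⁻¹ * g * z) (mp.rtr z⁻¹ f) = mp.rtr z⁻¹ f := by
    rw [← mp.mul_rtr, show (z⁻¹ * g * z) * z⁻¹ = z⁻¹ * g by group, mp.mul_rtr, hgf]
  have := core_trace htau hC b hb1 hbcoassoc (mp.rtr z⁻¹ f) (z⁻¹ * g * z) ha
  simpa [Matrix.trace, Matrix.diag] using this
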